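/- arXiv:1209.5802 — 2 statements merged into one kernel-verified Lean document; each statement's English description precedes it below -/
import Mathlib

section
/- Let β > 0 and let M be a positive integer with M ≥ β. Set β' = β/M. Then for all ρ_1, …, ρ_M ∈ [0,1], | Σ_{i=1}^M log(1 + ρ_i·(exp(−β') − 1)) + β'·Σ_{i=1}^M ρ_i | ≤ 4·β²/M. -/
open Real Finset

lemma key_term_bound (b r : ℝ) (hb0 : 0 < b) (hb1 : b ≤ 1)
    (hr0 : 0 ≤ r) (hr1 : r ≤ 1) :
    |Real.log (1 + r * (Real.exp (-b) - 1)) + b * r| ≤ 4 * b ^ 2 := by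
  set x : ℝ := r * (Real.exp (-b) - 1) with hx
  have hexp_pos : 0 < Real.exp (-b) := Real.exp_pos _
  have hexpb_pos : 0 < Real.exp b := Real.exp_pos _
  have hmul : Real.exp b * Real.exp (-b) = 1 := by
    rw [← Real.exp_add]; simp
  have hle1 : Real.exp (-b) ≤ 1 := Real.exp_le_one_iff.mpr (by linarith)
  have hge : 1 - b ≤ Real.exp (-b) := by
    have := Real.add_one_le_exp (-b); linarith
  have hxnp : x ≤ 0 := mul_nonpos_of_nonneg_of_nonpos hr0 (by linarith)
  have hxge : Real.exp (-b) - 1 ≤ x := by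
    have : r * (Real.exp (-b) - 1) ≥ 1 * (Real.exp (-b) - 1) := by
      apply mul_le_mul_of_nonpos_right hr1 (by linarith)
    linarith
  have h1x : 0 < 1 + x := by linarith
  have hexpb3 : Real.exp b ≤ 3 := by
    have h1 : Real.exp b ≤ Real.exp 1 := Real.exp_le_exp.mpr hb1
    have h2 : Real.exp 1 < 2.7182818286 := Real.exp_one_lt_d9
    linarith
  -- upper bound
  have hupper : Real.log (1 + x) + b * r ≤ 4 * b ^ 2 := by
    have hlog : Real.log (1 + x) ≤ x := by
      have := Real.log_le_sub_one_of_pos h1x; linarith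
    -- x + b r = r (exp(-b) - 1 + b) ≤ exp(-b) - 1 + b ≤ b^2
    have h1 : Real.exp (-b) - 1 + b ≤ b ^ 2 := by
      -- (1+b) exp(-b) ≤ 1 since 1+b ≤ exp b
      have h2 : 1 + b ≤ Real.exp b := by
        have := Real.add_one_le_exp b; linarith
      nlinarith [mul_le_mul_of_nonneg_right h2 hexp_pos.le]
    have h3 : 0 ≤ Real.exp (-b) - 1 + b := by linarith
    have h4 : x + b * r = r * (Real.exp (-b) - 1 + b) := by ring
    nlinarith [mul_le_mul_of_nonneg_right hr1 h3]
  -- lower bound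
  have hlower : -(4 * b ^ 2) ≤ Real.log (1 + x) + b * r := by
    -- log(1+x) ≥ 1 - 1/(1+x) = x/(1+x) ≥ x * exp b
    have hlog : x / (1 + x) ≤ Real.log (1 + x) := by
      have h := Real.log_le_sub_one_of_pos (show (0:ℝ) < (1 + x)⁻¹ by positivity)
      rw [Real.log_inv] at h
      have : x / (1 + x) = 1 - (1 + x)⁻¹ := by field_simp; ring
      linarith [h, this]
    have h2 : x * Real.exp b ≤ x / (1 + x) := by
      rw [le_div_iff₀ h1x]
      -- x * exp b * (1+x) ≤ x  ⟺  x * (exp b * (1+x) - 1) ≤ 0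
      have h3 : 1 ≤ Real.exp b * (1 + x) := by
        nlinarith [mul_le_mul_of_nonneg_left hxge hexpb_pos.le]
      nlinarith
    -- x * exp b = r * (1 - exp b)
    have h4 : x * Real.exp b = r * (1 - Real.exp b) := by
      rw [hx]; nlinarith [hmul]
    -- 1 - exp b ≥ -b * exp b  (from exp b - 1 ≤ b exp b, i.e. exp(-b) ≥ 1-b)
    have h5 : -(b * Real.exp b) ≤ 1 - Real.exp b := by
      nlinarith [mul_le_mul_of_nonneg_right hge hexpb_pos.le]
    -- so term ≥ r*(1-exp b) + b r = r*(1 + b - exp b) ≥ 1 + b - exp b ≥ -b^2 exp b ≥ -3b^2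
    have h6 : 1 + b - Real.exp b ≤ 0 := by
      have := Real.add_one_le_exp b; linarith
    have h7 : r * (1 + b - Real.exp b) ≥ 1 * (1 + b - Real.exp b) :=
      mul_le_mul_of_nonpos_right hr1 h6
    have h8 : -(b ^ 2 * Real.exp b) ≤ 1 + b - Real.exp b := by
      nlinarith [mul_le_mul_of_nonneg_right h5 hb0.le]
    nlinarith [sq_nonneg b]
  rw [abs_le]; exact ⟨by linarith, hupper⟩

/-- With `β > 0`, `M ≥ β` a positive integer, `β' = β / M` and densities `ρ i ∈ [0,1]`,
the exponent of the new mesoscopic model is within `4β²/M` of the exponent `-β'∑ρᵢ`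
of the original model:
`|∑ i, log (1 + ρ i * (exp (-β') - 1)) + β' * ∑ i, ρ i| ≤ 4 * β² / M`. -/
theorem log_sum_close_to_linear
    (β : ℝ) (hβ : 0 < β) {M : ℕ} (hM : 0 < M) (hMβ : β ≤ (M : ℝ))
    (ρ : Fin M → ℝ) (hρ : ∀ i, ρ i ∈ Set.Icc (0 : ℝ) 1) :
    |(∑ i, Real.log (1 + ρ i * (Real.exp (-(β / M)) - 1)))
        + (β / M) * ∑ i, ρ i| ≤ 4 * β ^ 2 / M := by
  have hMpos : (0:ℝ) < M := by exact_mod_cast hM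
  set b : ℝ := β / M with hb
  have hb0 : 0 < b := div_pos hβ hMpos
  have hb1 : b ≤ 1 := by rw [hb, div_le_one hMpos]; exact hMβ
  have hkey : ∀ i : Fin M,
      |Real.log (1 + ρ i * (Real.exp (-b) - 1)) + b * ρ i| ≤ 4 * b ^ 2 := fun i =>
    key_term_bound b (ρ i) hb0 hb1 (hρ i).1 (hρ i).2
  calc |(∑ i, Real.log (1 + ρ i * (Real.exp (-b) - 1))) + b * ∑ i, ρ i|
      = |∑ i, (Real.log (1 + ρ i * (Real.exp (-b) - 1)) + b * ρ i)| := by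
        rw [Finset.sum_add_distrib, Finset.mul_sum]
    _ ≤ ∑ i, |Real.log (1 + ρ i * (Real.exp (-b) - 1)) + b * ρ i| :=
        Finset.abs_sum_le_sum_abs _ _
    _ ≤ ∑ _i : Fin M, 4 * b ^ 2 := Finset.sum_le_sum fun i _ => hkey i
    _ = M * (4 * b ^ 2) := by rw [Finset.sum_const]; simp [mul_comm]
    _ = 4 * β ^ 2 / M := by rw [hb]; field_simp
end

section
/- Let β > 0 and let M be a positive integer with M ≥ β. Set β' = β/M. Then for all ρ_1, …, ρ_M ∈ [0,1], | Π_{i=1}^M (1 + ρ_i·(exp(−β') − 1)) − exp(−β'·Σ_{i=1}^M ρ_i) | ≤ 4·β²/M. -/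
lemma abs_prod_sub_prod_le {ι : Type*} (s : Finset ι) (f g : ι → ℝ)
    (hf : ∀ i ∈ s, |f i| ≤ 1) (hg : ∀ i ∈ s, |g i| ≤ 1) :
    |∏ i ∈ s, f i - ∏ i ∈ s, g i| ≤ ∑ i ∈ s, |f i - g i| := by
  classical
  induction s using Finset.induction with
  | empty => simp
  | @insert a s ha ih =>
    rw [Finset.prod_insert ha, Finset.prod_insert ha, Finset.sum_insert ha]
    have hP : |∏ i ∈ s, g i| ≤ 1 := by
      rw [Finset.abs_prod]
      exact Finset.prod_le_one (fun i _ => abs_nonneg _)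
        (fun i hi => hg i (Finset.mem_insert_of_mem hi))
    have key : f a * ∏ i ∈ s, f i - g a * ∏ i ∈ s, g i
        = f a * (∏ i ∈ s, f i - ∏ i ∈ s, g i) + (f a - g a) * ∏ i ∈ s, g i := by ring
    rw [key]
    calc |f a * (∏ i ∈ s, f i - ∏ i ∈ s, g i) + (f a - g a) * ∏ i ∈ s, g i|
        ≤ |f a| * |∏ i ∈ s, f i - ∏ i ∈ s, g i| + |f a - g a| * |∏ i ∈ s, g i| := by
          rw [← abs_mul, ← abs_mul]; exact abs_add_le _ _
      _ ≤ 1 * (∑ i ∈ s, |f i - g i|) + |f a - g a| * 1 := by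
          exact add_le_add
            (mul_le_mul (hf a (Finset.mem_insert_self a s))
              (ih (fun i hi => hf i (Finset.mem_insert_of_mem hi))
                (fun i hi => hg i (Finset.mem_insert_of_mem hi)))
              (abs_nonneg _) zero_le_one)
            (mul_le_mul_of_nonneg_left hP (abs_nonneg _))
      _ = |f a - g a| + ∑ i ∈ s, |f i - g i| := by ring

/-- For `0 ≤ s`, `0 ≤ exp (-s) - 1 + s ≤ s ^ 2`. -/
lemma exp_neg_approx {s : ℝ} (hs : 0 ≤ s) :
    Real.exp (-s) - 1 + s ∈ Set.Icc 0 (s ^ 2) := by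
  constructor
  · nlinarith [Real.add_one_le_exp (-s)]
  · have h2 : 1 + s ≤ Real.exp s := by linarith [Real.add_one_le_exp s]
    have h3 : (0:ℝ) < 1 + s := by linarith
    have h1 : Real.exp (-s) ≤ (1 + s)⁻¹ := by
      rw [Real.exp_neg]
      exact inv_anti₀ h3 h2
    have h4 : (1 + s)⁻¹ - 1 + s ≤ s ^ 2 := by
      rw [← sub_nonneg]
      have : s ^ 2 - ((1 + s)⁻¹ - 1 + s) = s ^ 3 * (1 + s)⁻¹ := by
        field_simp
        ring
      rw [this]
      exact mul_nonneg (by positivity) (by positivity)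
    linarith

/-- With `β > 0`, `M ≥ β` a positive integer, `β' = β / M` and densities `ρ i ∈ [0,1]`,
the slowdown factors of the new and original mesoscopic models differ by at most `4β²/M`:
`|∏ i, (1 + ρ i * (exp (-β') - 1)) - exp (-β' * ∑ i, ρ i)| ≤ 4 * β² / M`. -/
theorem rate_difference_bound
    (β : ℝ) (hβ : 0 < β) {M : ℕ} (hM : 0 < M) (hMβ : β ≤ (M : ℝ))
    (ρ : Fin M → ℝ) (hρ : ∀ i, ρ i ∈ Set.Icc (0 : ℝ) 1) :
    |(∏ i, (1 + ρ i * (Real.exp (-(β / M)) - 1)))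
        - Real.exp (-((β / M) * ∑ i, ρ i))| ≤ 4 * β ^ 2 / M := by
  set t : ℝ := β / M with ht
  have hMpos : (0 : ℝ) < M := Nat.cast_pos.mpr hM
  have ht0 : 0 < t := div_pos hβ hMpos
  have ht1 : t ≤ 1 := by rw [ht, div_le_one hMpos]; exact hMβ
  have hexp : Real.exp (-(t * ∑ i, ρ i)) = ∏ i, Real.exp (-(t * ρ i)) := by
    rw [← Real.exp_sum]
    congr 1
    rw [Finset.mul_sum, ← Finset.sum_neg_distrib]
  rw [hexp]
  set f : Fin M → ℝ := fun i => 1 + ρ i * (Real.exp (-t) - 1) with hf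
  set g : Fin M → ℝ := fun i => Real.exp (-(t * ρ i)) with hg
  have hρ0 : ∀ i, 0 ≤ ρ i := fun i => (hρ i).1
  have hρ1 : ∀ i, ρ i ≤ 1 := fun i => (hρ i).2
  have hexp1 : Real.exp (-t) ≤ 1 := Real.exp_le_one_iff.mpr (by linarith)
  have hfb : ∀ i ∈ Finset.univ, |f i| ≤ 1 := by
    intro i _
    simp only [hf]
    rw [abs_le]
    constructor
    · nlinarith [hρ0 i, hρ1 i, Real.exp_pos (-t), hexp1]
    · nlinarith [hρ0 i, hρ1 i, Real.exp_pos (-t), hexp1]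
  have hgb : ∀ i ∈ Finset.univ, |g i| ≤ 1 := by
    intro i _
    simp only [hg]
    rw [abs_of_pos (Real.exp_pos _)]
    exact Real.exp_le_one_iff.mpr (by nlinarith [hρ0 i])
  have hmain := abs_prod_sub_prod_le Finset.univ f g hfb hgb
  have hterm : ∀ i, |f i - g i| ≤ t ^ 2 := by
    intro i
    have h1 := exp_neg_approx ht0.le
    have h2 := exp_neg_approx (mul_nonneg ht0.le (hρ0 i))
    have hA : 0 ≤ ρ i * (Real.exp (-t) - 1 + t) := mul_nonneg (hρ0 i) h1.1
    have hB : (t * ρ i) ^ 2 ≤ t ^ 2 := by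
      rw [mul_pow]
      have h5 : ρ i ^ 2 ≤ 1 := by nlinarith [hρ0 i, hρ1 i]
      nlinarith [sq_nonneg t]
    have hC : ρ i * (Real.exp (-t) - 1 + t) ≤ t ^ 2 := by
      nlinarith [h1.2, h1.1, hρ0 i, hρ1 i]
    simp only [hf, hg]
    rw [abs_le]
    constructor
    · linarith [h2.2]
    · linarith [h2.1]
  calc |∏ i, f i - ∏ i, g i| ≤ ∑ i : Fin M, |f i - g i| := hmain
    _ ≤ ∑ _i : Fin M, t ^ 2 := Finset.sum_le_sum (fun i _ => hterm i)
    _ = M * t ^ 2 := by simp [mul_comm]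
    _ = β ^ 2 / M := by rw [ht]; field_simp
    _ ≤ 4 * β ^ 2 / M := by gcongr; nlinarith
end
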